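/- Let C ⊆ [0,1] be the standard middle-thirds Cantor set and define t : C → C by t(x) = 3x for x ≤ 1/3 and t(x) = 0 for x ≥ 2/3. Then t is a well-defined continuous surjection from C onto C, and the dynamical system (C,t) does not have shadowing. -/

import Mathlib

/-- The system `(X, f)` has shadowing. -/
def HasShadowing {X : Type*} [MetricSpace X] (f : X → X) : Prop :=
  ∀ ε > (0 : ℝ), ∃ δ > (0 : ℝ), ∀ x : ℕ → X,
    (∀ i : ℕ, dist (f (x i)) (x (i + 1)) < δ) →
      ∃ z : X, ∀ i : ℕ, dist (f^[i] z) (x i) < ε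

/-- The finite stages of the middle-thirds construction:
`C₀ = [0,1]`, `C_{n+1} = C_n/3 ∪ (2/3 + C_n/3)`. -/
def cantorApprox : ℕ → Set ℝ
  | 0 => Set.Icc 0 1
  | n + 1 => (fun x => x / 3) '' cantorApprox n ∪ (fun x => 2 / 3 + x / 3) '' cantorApprox n

/-- The standard middle-thirds Cantor set. -/
def middleThirdsCantorSet : Set ℝ := ⋂ n, cantorApprox n

lemma cantorApprox_subset_Icc (n : ℕ) : cantorApprox n ⊆ Set.Icc 0 1 := by
  induction n with
  | zero => exact le_refl _
  | succ n ih =>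
    rintro x (⟨y, hy, rfl⟩ | ⟨y, hy, rfl⟩) <;> obtain ⟨h0, h1⟩ := ih hy <;>
      constructor <;> simp only [] <;> linarith

lemma mem_cantor_iff {x : ℝ} : x ∈ middleThirdsCantorSet ↔ ∀ n, x ∈ cantorApprox n :=
  Set.mem_iInter

lemma cantor_subset_Icc : middleThirdsCantorSet ⊆ Set.Icc 0 1 := fun x hx =>
  cantorApprox_subset_Icc 0 (mem_cantor_iff.1 hx 0)

lemma div3_mem {x : ℝ} (hx : x ∈ middleThirdsCantorSet) : x / 3 ∈ middleThirdsCantorSet := by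
  rw [mem_cantor_iff]
  intro n
  cases n with
  | zero =>
    obtain ⟨h0, h1⟩ := cantor_subset_Icc hx
    exact ⟨by linarith, by linarith⟩
  | succ n => exact Or.inl ⟨x, mem_cantor_iff.1 hx n, rfl⟩

lemma gap_mem {x : ℝ} (hx : x ∈ middleThirdsCantorSet) : x ≤ 1/3 ∨ 2/3 ≤ x := by
  have h1 := mem_cantor_iff.1 hx 1
  rcases h1 with ⟨y, hy, rfl⟩ | ⟨y, hy, rfl⟩
  · obtain ⟨h0, h1⟩ := cantorApprox_subset_Icc 0 hy
    exact Or.inl (by simp only []; linarith)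
  · obtain ⟨h0, h1⟩ := cantorApprox_subset_Icc 0 hy
    exact Or.inr (by simp only []; linarith)

lemma triple_mem {x : ℝ} (hx : x ∈ middleThirdsCantorSet) (hle : x ≤ 1/3) :
    3 * x ∈ middleThirdsCantorSet := by
  rw [mem_cantor_iff]
  intro n
  rcases mem_cantor_iff.1 hx (n+1) with ⟨y, hy, rfl⟩ | ⟨y, hy, rfl⟩
  · have : 3 * (y / 3) = y := by ring
    rw [this]; exact hy
  · obtain ⟨h0, h1⟩ := cantorApprox_subset_Icc n hy
    exfalso
    simp only [] at hle
    linarith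

lemma zero_mem_approx (n : ℕ) : (0:ℝ) ∈ cantorApprox n := by
  induction n with
  | zero => exact ⟨le_refl 0, zero_le_one⟩
  | succ n ih => exact Or.inl ⟨0, ih, by norm_num⟩

lemma zero_mem : (0:ℝ) ∈ middleThirdsCantorSet := mem_cantor_iff.2 zero_mem_approx

lemma two_thirds_mem : (2/3 : ℝ) ∈ middleThirdsCantorSet := by
  rw [mem_cantor_iff]
  intro n
  cases n with
  | zero => exact ⟨by norm_num, by norm_num⟩
  | succ n => exact Or.inr ⟨0, zero_mem_approx n, by norm_num⟩

lemma two_div_pow_mem : ∀ k : ℕ, (2 / 3 ^ (k+1) : ℝ) ∈ middleThirdsCantorSet := by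
  intro k
  induction k with
  | zero => simpa using two_thirds_mem
  | succ k ih =>
    have : (2 / 3 ^ (k+2) : ℝ) = (2 / 3 ^ (k+1)) / 3 := by ring
    rw [this]; exact div3_mem ih

noncomputable def cantorTent (x : middleThirdsCantorSet) : middleThirdsCantorSet :=
  if h : (x : ℝ) ≤ 1/3 then ⟨3 * (x:ℝ), triple_mem x.2 h⟩ else ⟨0, zero_mem⟩

lemma cantorTent_of_le {x : middleThirdsCantorSet} (h : (x:ℝ) ≤ 1/3) :
    (cantorTent x : ℝ) = 3 * (x:ℝ) := by rw [cantorTent, dif_pos h]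

lemma cantorTent_of_ge {x : middleThirdsCantorSet} (h : (2/3:ℝ) ≤ (x:ℝ)) :
    (cantorTent x : ℝ) = 0 := by
  have : ¬ ((x:ℝ) ≤ 1/3) := by linarith
  rw [cantorTent, dif_neg this]

lemma cantorTent_continuous : Continuous cantorTent := by
  rw [Metric.continuous_iff]
  intro x ε hε
  refine ⟨min (ε/3) (1/3), by positivity, ?_⟩
  intro y hy
  rw [Subtype.dist_eq, Real.dist_eq] at hy
  rw [Subtype.dist_eq, Real.dist_eq]
  have hy1 : |(y:ℝ) - (x:ℝ)| < ε/3 := lt_of_lt_of_le hy (min_le_left _ _)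
  have hy2 : |(y:ℝ) - (x:ℝ)| < 1/3 := lt_of_lt_of_le hy (min_le_right _ _)
  rw [abs_lt] at hy2
  by_cases hx : (x:ℝ) ≤ 1/3
  · have hyle : (y:ℝ) ≤ 1/3 := by
      rcases gap_mem y.2 with h | h
      · exact h
      · linarith [hy2.2]
    rw [cantorTent_of_le hx, cantorTent_of_le hyle]
    have : 3 * (y:ℝ) - 3 * (x:ℝ) = 3 * ((y:ℝ) - (x:ℝ)) := by ring
    rw [this, abs_mul, abs_of_nonneg (by norm_num : (0:ℝ) ≤ 3)]
    linarith
  · have hxge : (2/3:ℝ) ≤ (x:ℝ) := by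
      rcases gap_mem x.2 with h | h
      · exact absurd h hx
      · exact h
    have hyge : (2/3:ℝ) ≤ (y:ℝ) := by
      rcases gap_mem y.2 with h | h
      · linarith [hy2.1]
      · exact h
    rw [cantorTent_of_ge hxge, cantorTent_of_ge hyge]
    simpa using hε

lemma cantorTent_surjective : Function.Surjective cantorTent := by
  intro y
  have hmem : ((y:ℝ) / 3) ∈ middleThirdsCantorSet := div3_mem y.2
  refine ⟨⟨(y:ℝ)/3, hmem⟩, ?_⟩
  have hle : ((y:ℝ)/3 : ℝ) ≤ 1/3 := by
    obtain ⟨h0, h1⟩ := cantor_subset_Icc y.2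
    linarith
  apply Subtype.ext
  rw [cantorTent_of_le hle]
  push_cast
  ring

lemma cantorTent_not_shadowing : ¬ HasShadowing cantorTent := by
  intro h
  obtain ⟨δ, hδ, hshad⟩ := h (1/3) (by norm_num)
  obtain ⟨n, hn⟩ := exists_pow_lt_of_lt_one (half_pos hδ) (by norm_num : (1/3:ℝ) < 1)
  set p := n + 1 with hp
  have hppos : 0 < p := Nat.succ_pos n
  -- the small quantity is < δ
  have hsmall : (2 / 3 ^ p : ℝ) < δ := by
    have h1 : ((1:ℝ)/3)^n = 1/3^n := by rw [div_pow, one_pow]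
    rw [h1] at hn
    have h3 : (0:ℝ) < 3^n := by positivity
    have h4 : (2:ℝ)/3^n < δ := by
      rw [div_lt_iff₀ h3]
      rw [div_lt_iff₀ h3] at hn
      linarith
    have h5 : (3:ℝ)^p = 3 * 3^n := by rw [hp, pow_succ]; ring
    rw [h5]
    have h6 : (2:ℝ) / (3 * 3^n) ≤ 2 / 3^n := by
      apply div_le_div_of_nonneg_left (by norm_num) h3
      linarith
    linarith
  -- the pseudo-orbit
  set orb : ℕ → middleThirdsCantorSet :=
    fun i => ⟨2 / 3 ^ (n - i % p + 1), two_div_pow_mem _⟩ with horb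
  have hmodsucc : ∀ i : ℕ, (i + 1) % p = (i % p + 1) % p := by
    intro i
    have hd := Nat.div_add_mod i p
    have : i + 1 = p * (i / p) + (i % p + 1) := by omega
    rw [this, Nat.mul_add_mod]
  have hpseudo : ∀ i : ℕ, dist (cantorTent (orb i)) (orb (i + 1)) < δ := by
    intro i
    have hilt : i % p < p := Nat.mod_lt _ hppos
    by_cases hc : i % p = n
    · -- at the top: jump from 0 back to 2/3^p
      have hval : (orb i : ℝ) = 2/3 := by simp [horb, hc]
      have ht : (cantorTent (orb i) : ℝ) = 0 :=
        cantorTent_of_ge (by rw [hval])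
      have hm1 : (i + 1) % p = 0 := by
        rw [hmodsucc, hc, hp, Nat.mod_self]
      have hval2 : (orb (i+1) : ℝ) = 2 / 3 ^ p := by
        rw [show (orb (i+1) : ℝ) = 2 / 3 ^ (n - (i+1) % p + 1) from rfl, hm1, Nat.sub_zero, hp]
      rw [Subtype.dist_eq, Real.dist_eq, ht, hval2]
      rw [zero_sub, abs_neg, abs_of_nonneg (by positivity)]
      exact hsmall
    · -- in the middle: exact step
      have hmlt : i % p < n := by omega
      set j := n - i % p with hj
      have hj1 : 1 ≤ j := by omega
      have hval : (orb i : ℝ) = 2 / 3 ^ (j + 1) := rfl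
      have h9 : (9:ℝ) ≤ 3 ^ (j + 1) := by
        calc (9:ℝ) = 3^2 := by norm_num
        _ ≤ 3^(j+1) := pow_le_pow_right₀ (by norm_num) (by omega)
      have hle : (orb i : ℝ) ≤ 1/3 := by
        rw [hval, div_le_div_iff₀ (by positivity) (by norm_num)]
        linarith
      have ht : (cantorTent (orb i) : ℝ) = 2 / 3 ^ j := by
        rw [cantorTent_of_le hle, hval, pow_succ]
        have h3 : (3:ℝ)^j ≠ 0 := by positivity
        field_simp
      have hm1 : (i + 1) % p = i % p + 1 := by
        rw [hmodsucc, Nat.mod_eq_of_lt (by omega)]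
      have hval2 : (orb (i+1) : ℝ) = 2 / 3 ^ j := by
        have : n - (i % p + 1) + 1 = j := by omega
        simp only [horb, hm1, this]
      rw [Subtype.dist_eq, Real.dist_eq, ht, hval2, sub_self, abs_zero]
      exact hδ
  obtain ⟨z, hz⟩ := hshad orb hpseudo
  -- at time n the true orbit is ≥ 2/3
  have horbn : (orb n : ℝ) = 2/3 := by
    simp [horb, Nat.mod_eq_of_lt (by omega : n < p)]
  have hzn := hz n
  rw [Subtype.dist_eq, Real.dist_eq, horbn, abs_lt] at hzn
  have hge : (2/3 : ℝ) ≤ (cantorTent^[n] z : ℝ) := by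
    rcases gap_mem (cantorTent^[n] z).2 with h | h
    · exfalso; linarith [hzn.1]
    · exact h
  -- hence the orbit is 0 from time p on
  have hzero : cantorTent^[p] z = ⟨0, zero_mem⟩ := by
    rw [hp, Function.iterate_succ_apply']
    exact Subtype.ext (cantorTent_of_ge hge)
  have htzero : cantorTent ⟨0, zero_mem⟩ = ⟨0, zero_mem⟩ := by
    refine Subtype.ext ?_
    rw [cantorTent_of_le (by norm_num)]
    norm_num
  have hall : ∀ k : ℕ, cantorTent^[p + k] z = ⟨0, zero_mem⟩ := by
    intro k
    induction k with
    | zero => simpa using hzero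
    | succ k ih =>
      rw [show p + (k+1) = (p + k) + 1 by ring, Function.iterate_succ_apply', ih, htzero]
  -- but at time p + n the pseudo-orbit is back at 2/3
  have horbpn : (orb (p + n) : ℝ) = 2/3 := by
    have : (p + n) % p = n := by
      rw [Nat.add_mod_left, Nat.mod_eq_of_lt (by omega)]
    simp [horb, this]
  have hfinal := hz (p + n)
  rw [hall n, Subtype.dist_eq, Real.dist_eq, horbpn] at hfinal
  have h0 : ((⟨0, zero_mem⟩ : middleThirdsCantorSet) : ℝ) = 0 := rfl
  rw [h0, zero_sub, abs_neg, abs_of_nonneg (by norm_num)] at hfinal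
  linarith

/-- There is a well-defined continuous surjection `t` of the middle-thirds Cantor set onto
itself with `t(x) = 3x` for `x ≤ 1/3` and `t(x) = 0` for `x ≥ 2/3`, and the system
`(C, t)` does not have shadowing. -/
theorem cantor_tent_no_shadowing :
    ∃ t : middleThirdsCantorSet → middleThirdsCantorSet,
      (∀ x : middleThirdsCantorSet, ((x : ℝ) ≤ 1 / 3 → (t x : ℝ) = 3 * (x : ℝ)) ∧
        (2 / 3 ≤ (x : ℝ) → (t x : ℝ) = 0)) ∧
      Continuous t ∧ Function.Surjective t ∧ ¬ HasShadowing t := by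
  exact ⟨cantorTent,
    fun x => ⟨fun h => cantorTent_of_le h, fun h => cantorTent_of_ge h⟩,
    cantorTent_continuous, cantorTent_surjective, cantorTent_not_shadowing⟩
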